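/- arXiv:1506.06081 — 2 statements merged into one kernel-verified Lean document; each statement's English description precedes it below -/
import Mathlib

section
/- Suppose f satisfies the regularity condition RC(ε, α, β), suppose Z^k ∈ R^{n×r} satisfies d(Z^k, Z*) ≤ ε, and let 0 < μ < min(α/2, 2/β). Then the gradient update Z^{k+1} = Z^k − (μ/‖Z*‖_F²) ∇f(Z^k) satisfies d(Z^{k+1}, Z*) ≤ √(1 − 2μ/(α κ r)) · d(Z^k, Z*), where κ = σ_1/σ_r. -/
open Matrix MeasureTheory ProbabilityTheory Real
open scoped BigOperators ENNReal

noncomputable section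

/-- Frobenius norm of a real matrix. -/
def frobNorm {a b : ℕ} (M : Matrix (Fin a) (Fin b) ℝ) : ℝ :=
  Real.sqrt (∑ i, ∑ j, (M i j) ^ 2)

/-- Frobenius (trace) inner product `⟨M, N⟩ = trace (Mᵀ N)`. -/
def frobInner {a b : ℕ} (M N : Matrix (Fin a) (Fin b) ℝ) : ℝ :=
  ∑ i, ∑ j, M i j * N i j

/-- Operator (spectral) norm of a real square matrix. -/
def opNorm {n : ℕ} (M : Matrix (Fin n) (Fin n) ℝ) : ℝ :=
  ‖LinearMap.toContinuousLinearMap (Matrix.toEuclideanLin M)‖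

/-- An `r × r` real matrix is orthonormal if `U Uᵀ = Uᵀ U = I`. -/
def IsOrthoMat {r : ℕ} (U : Matrix (Fin r) (Fin r) ℝ) : Prop :=
  U * Uᵀ = 1 ∧ Uᵀ * U = 1

/-- The solution set `S̃ = {Z* U : U orthonormal}`. -/
def solSet {n r : ℕ} (Zstar : Matrix (Fin n) (Fin r) ℝ) : Set (Matrix (Fin n) (Fin r) ℝ) :=
  {Zt | ∃ U, IsOrthoMat U ∧ Zt = Zstar * U}

/-- The distance `d(Z, Z*) = min_{Z̃ ∈ S̃} ‖Z − Z̃‖_F`. -/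
def dSol {n r : ℕ} (Z Zstar : Matrix (Fin n) (Fin r) ℝ) : ℝ :=
  ⨅ Zt : solSet Zstar, frobNorm (Z - (Zt : Matrix (Fin n) (Fin r) ℝ))

/-- `Zbar` is a matrix in the solution set closest to `Z`. -/
def IsClosest {n r : ℕ} (Zstar Z Zbar : Matrix (Fin n) (Fin r) ℝ) : Prop :=
  Zbar ∈ solSet Zstar ∧ ∀ Zt ∈ solSet Zstar, frobNorm (Z - Zbar) ≤ frobNorm (Z - Zt)

/-- The gradient `∇f(Z) = (1/m) Σ_i (trace(Zᵀ A_i Z) − b_i) A_i Z`. -/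
def gradf {n r m : ℕ} (A : Fin m → Matrix (Fin n) (Fin n) ℝ) (b : Fin m → ℝ)
    (Z : Matrix (Fin n) (Fin r) ℝ) : Matrix (Fin n) (Fin r) ℝ :=
  (1 / (m : ℝ)) • ∑ i, (Matrix.trace (Zᵀ * A i * Z) - b i) • (A i * Z)

/-- Assumption A1 with parameter `δ`. -/
def AssumpA1 {n m : ℕ} (A : Fin m → Matrix (Fin n) (Fin n) ℝ) (σ1 : ℝ) (r : ℕ)
    (δ : ℝ) : Prop :=
  ∀ u : Fin n → ℝ, Real.sqrt (∑ i, u i ^ 2) ≤ Real.sqrt σ1 →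
    opNorm ((1 / (m : ℝ)) • ∑ i, (u ⬝ᵥ (A i).mulVec u) • A i - (2 : ℝ) • vecMulVec u u)
      ≤ δ / r

/-- Assumption A2 with parameter `δ`. -/
def AssumpA2 {n r m : ℕ} (A : Fin m → Matrix (Fin n) (Fin n) ℝ)
    (Zstar : Matrix (Fin n) (Fin r) ℝ) (δ : ℝ) : Prop :=
  ∀ Zt ∈ solSet Zstar, ∀ s k : Fin r,
    opNorm ((1 / (m : ℝ)) •
        ∑ i, (2 : ℝ) • (A i * vecMulVec (fun j => Zt j s) (fun j => Zt j k) * A i)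
      - ((2 * ((fun j => Zt j s) ⬝ᵥ fun j => Zt j k)) • (1 : Matrix (Fin n) (Fin n) ℝ)
          + (2 : ℝ) • vecMulVec (fun j => Zt j k) (fun j => Zt j s)))
      ≤ δ / r

/-- The regularity condition RC(ε, α, β). -/
def RegCond {n r m : ℕ} (A : Fin m → Matrix (Fin n) (Fin n) ℝ) (b : Fin m → ℝ)
    (Zstar : Matrix (Fin n) (Fin r) ℝ) (σr ε α β : ℝ) : Prop :=
  ∀ Z Zbar : Matrix (Fin n) (Fin r) ℝ, dSol Z Zstar ≤ ε → IsClosest Zstar Z Zbar →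
    frobInner (gradf A b Z) (Z - Zbar) ≥
      (1 / α) * σr * frobNorm (Z - Zbar) ^ 2
        + (1 / (β * frobNorm Zstar ^ 2)) * frobNorm (gradf A b Z) ^ 2

section Aux

variable {a b : ℕ}

def sumSq (M : Matrix (Fin a) (Fin b) ℝ) : ℝ := ∑ i, ∑ j, (M i j) ^ 2

lemma sumSq_nonneg (M : Matrix (Fin a) (Fin b) ℝ) : 0 ≤ sumSq M :=
  Finset.sum_nonneg fun _ _ => Finset.sum_nonneg fun _ _ => sq_nonneg _

lemma frobNorm_eq (M : Matrix (Fin a) (Fin b) ℝ) : frobNorm M = Real.sqrt (sumSq M) := rfl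

lemma frobNorm_nonneg (M : Matrix (Fin a) (Fin b) ℝ) : 0 ≤ frobNorm M := Real.sqrt_nonneg _

lemma frobNorm_sq (M : Matrix (Fin a) (Fin b) ℝ) : frobNorm M ^ 2 = sumSq M :=
  Real.sq_sqrt (sumSq_nonneg M)

lemma sumSq_sub_smul (X G : Matrix (Fin a) (Fin b) ℝ) (c : ℝ) :
    sumSq (X - c • G) = sumSq X - 2 * c * frobInner G X + c ^ 2 * sumSq G := by
  have h : ∀ i j, (X i j - c * G i j) ^ 2
      = X i j ^ 2 - 2 * c * (G i j * X i j) + c ^ 2 * G i j ^ 2 := by intros; ring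
  simp only [sumSq, frobInner, Matrix.sub_apply, Matrix.smul_apply, smul_eq_mul, h,
    Finset.sum_add_distrib, Finset.sum_sub_distrib, ← Finset.mul_sum]

end Aux
section Aux2

variable {n r : ℕ}

lemma isOrthoMat_one : IsOrthoMat (1 : Matrix (Fin r) (Fin r) ℝ) :=
  ⟨by simp, by simp⟩

lemma zstar_mem_solSet (Zstar : Matrix (Fin n) (Fin r) ℝ) : Zstar ∈ solSet Zstar :=
  ⟨1, isOrthoMat_one, (Matrix.mul_one _).symm⟩

lemma frobNorm_continuous (Z : Matrix (Fin n) (Fin r) ℝ) :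
    Continuous fun Zt : Matrix (Fin n) (Fin r) ℝ => frobNorm (Z - Zt) := by
  refine Real.continuous_sqrt.comp (continuous_finset_sum _ fun i _ =>
    continuous_finset_sum _ fun j _ => ?_)
  have h : Continuous fun Zt : Matrix (Fin n) (Fin r) ℝ => Zt i j :=
    (continuous_apply j).comp (continuous_apply i)
  exact (continuous_const.sub h).pow 2

lemma exists_closest (Zstar Z : Matrix (Fin n) (Fin r) ℝ) :
    ∃ Zbar, IsClosest Zstar Z Zbar := by
  have hK : IsCompact {U : Matrix (Fin r) (Fin r) ℝ | ∀ i j, U i j ∈ Set.Icc (-1:ℝ) 1} := by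
    have he : {U : Matrix (Fin r) (Fin r) ℝ | ∀ i j, U i j ∈ Set.Icc (-1:ℝ) 1}
        = Set.univ.pi (fun _ : Fin r => Set.univ.pi fun _ : Fin r => Set.Icc (-1:ℝ) 1) := by
      ext U
      constructor
      · intro h i _ j _; exact h i j
      · intro h i j; exact h i (Set.mem_univ i) j (Set.mem_univ j)
    rw [he]
    exact isCompact_univ_pi fun i => isCompact_univ_pi fun j => isCompact_Icc
  have hclosed : IsClosed {U : Matrix (Fin r) (Fin r) ℝ | IsOrthoMat U} := by
    have h1 : IsClosed ((fun U : Matrix (Fin r) (Fin r) ℝ => U * Uᵀ) ⁻¹' {1}) :=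
      isClosed_singleton.preimage (continuous_id.matrix_mul continuous_id.matrix_transpose)
    have h2 : IsClosed ((fun U : Matrix (Fin r) (Fin r) ℝ => Uᵀ * U) ⁻¹' {1}) :=
      isClosed_singleton.preimage (continuous_id.matrix_transpose.matrix_mul continuous_id)
    have : {U : Matrix (Fin r) (Fin r) ℝ | IsOrthoMat U}
        = ((fun U : Matrix (Fin r) (Fin r) ℝ => U * Uᵀ) ⁻¹' {1})
          ∩ ((fun U : Matrix (Fin r) (Fin r) ℝ => Uᵀ * U) ⁻¹' {1}) := by
      ext U; simp [IsOrthoMat, Set.mem_inter_iff]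
    rw [this]; exact h1.inter h2
  have hsub : {U : Matrix (Fin r) (Fin r) ℝ | IsOrthoMat U}
      ⊆ {U : Matrix (Fin r) (Fin r) ℝ | ∀ i j, U i j ∈ Set.Icc (-1:ℝ) 1} := by
    intro U hU i j
    have hsum : ∑ k, U i k * U i k = 1 := by
      have := congrArg (fun M : Matrix (Fin r) (Fin r) ℝ => M i i) hU.1
      simpa [Matrix.mul_apply, Matrix.one_apply, Matrix.transpose_apply] using this
    have h1 : U i j * U i j ≤ 1 := by
      rw [← hsum]
      exact Finset.single_le_sum (fun k _ => mul_self_nonneg (U i k)) (Finset.mem_univ j)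
    simp only [Set.mem_Icc]
    constructor <;> nlinarith
  have hO : IsCompact {U : Matrix (Fin r) (Fin r) ℝ | IsOrthoMat U} :=
    hK.of_isClosed_subset hclosed hsub
  have himg : solSet Zstar = (fun U => Zstar * U) '' {U | IsOrthoMat U} := by
    ext Zt
    constructor
    · rintro ⟨U, hU, rfl⟩; exact ⟨U, hU, rfl⟩
    · rintro ⟨U, hU, rfl⟩; exact ⟨U, hU, rfl⟩
  have hcomp : IsCompact (solSet Zstar) := by
    rw [himg]; exact hO.image (continuous_const.matrix_mul continuous_id)
  obtain ⟨Zbar, hmem, hmin⟩ := hcomp.exists_isMinOn ⟨Zstar, zstar_mem_solSet Zstar⟩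
    (frobNorm_continuous Z).continuousOn
  exact ⟨Zbar, hmem, fun Zt hZt => hmin hZt⟩

lemma dSol_le_of_mem (Z Zstar Zt : Matrix (Fin n) (Fin r) ℝ) (h : Zt ∈ solSet Zstar) :
    dSol Z Zstar ≤ frobNorm (Z - Zt) := by
  have hbdd : BddBelow (Set.range fun Zt : solSet Zstar => frobNorm (Z - (Zt : Matrix (Fin n) (Fin r) ℝ))) :=
    ⟨0, by rintro x ⟨w, rfl⟩; exact frobNorm_nonneg _⟩
  exact ciInf_le hbdd (⟨Zt, h⟩ : solSet Zstar)

lemma dSol_eq_of_closest {Zstar Z Zbar : Matrix (Fin n) (Fin r) ℝ}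
    (hcl : IsClosest Zstar Z Zbar) : dSol Z Zstar = frobNorm (Z - Zbar) := by
  have : Nonempty (solSet Zstar) := ⟨⟨Zbar, hcl.1⟩⟩
  exact le_antisymm (dSol_le_of_mem _ _ _ hcl.1) (le_ciInf fun Zt => hcl.2 Zt Zt.2)

end Aux2
theorem gradient_step_contraction {n r m : ℕ} (hr : 0 < r)
    (A : Fin m → Matrix (Fin n) (Fin n) ℝ) (hAsym : ∀ i, (A i).IsSymm)
(Zstar : Matrix (Fin n) (Fin r) ℝ)
    (sig : Fin r → ℝ) (hpos : ∀ s, 0 < sig s)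
    (hmono : ∀ s t : Fin r, s ≤ t → sig t ≤ sig s)
    (hspec : ∃ V, IsOrthoMat V ∧ Zstarᵀ * Zstar = V * Matrix.diagonal sig * Vᵀ)
    (b : Fin m → ℝ) (hb : ∀ i, b i = Matrix.trace (A i * (Zstar * Zstarᵀ)))
    (ε α β μ : ℝ) (hμ0 : 0 < μ) (hμ : μ < min (α / 2) (2 / β))
    (hRC : RegCond A b Zstar (sig ⟨r - 1, Nat.sub_lt hr Nat.one_pos⟩) ε α β)
    (Zk : Matrix (Fin n) (Fin r) ℝ) (hZk : dSol Zk Zstar ≤ ε)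
    (Zk1 : Matrix (Fin n) (Fin r) ℝ)
    (hstep : Zk1 = Zk - (μ / frobNorm Zstar ^ 2) • gradf A b Zk) :
    dSol Zk1 Zstar ≤
      Real.sqrt (1 - 2 * μ / (α * ((sig ⟨0, hr⟩) / (sig ⟨r - 1, Nat.sub_lt hr Nat.one_pos⟩)) * r)) * dSol Zk Zstar := by
  obtain ⟨V, hV, hVeq⟩ := hspec
  have hμ1 : μ < α / 2 := hμ.trans_le (min_le_left _ _)
  have hμ2 : μ < 2 / β := hμ.trans_le (min_le_right _ _)
  have hα : 0 < α := by linarith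
  have hβ : 0 < β := by
    by_contra h
    push_neg at h
    have : 2 / β ≤ 0 := div_nonpos_iff.mpr (Or.inl ⟨by norm_num, h⟩)
    linarith
  set σ1 := sig ⟨0, hr⟩ with hσ1def
  set σr := sig ⟨r - 1, Nat.sub_lt hr Nat.one_pos⟩ with hσrdef
  have hσr : 0 < σr := hpos _
  have hσ1 : 0 < σ1 := hpos _
  have hσ1r : σr ≤ σ1 := hmono ⟨0, hr⟩ ⟨r - 1, Nat.sub_lt hr Nat.one_pos⟩ (by
    simp [Fin.le_def])
  have hrR : (1 : ℝ) ≤ (r : ℝ) := by exact_mod_cast hr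
  -- N = frobNorm Zstar ^ 2 = ∑ sig
  have hNsig : frobNorm Zstar ^ 2 = ∑ i, sig i := by
    have h1 : frobNorm Zstar ^ 2 = Matrix.trace (Zstarᵀ * Zstar) := by
      rw [frobNorm_sq, sumSq]
      simp only [Matrix.trace, Matrix.diag, Matrix.mul_apply, Matrix.transpose_apply]
      rw [Finset.sum_comm]
      exact Finset.sum_congr rfl fun i _ => Finset.sum_congr rfl fun j _ => (pow_two _)
    rw [h1, hVeq, Matrix.trace_mul_comm (V * Matrix.diagonal sig) Vᵀ, ← Matrix.mul_assoc,
      hV.2, Matrix.one_mul, Matrix.trace_diagonal]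
  have hN : 0 < frobNorm Zstar ^ 2 := by
    rw [hNsig]
    exact Finset.sum_pos (fun i _ => hpos i) ⟨⟨0, hr⟩, Finset.mem_univ _⟩
  have hNle : frobNorm Zstar ^ 2 ≤ (r : ℝ) * σ1 := by
    rw [hNsig]
    calc ∑ i, sig i ≤ ∑ _i : Fin r, σ1 :=
          Finset.sum_le_sum fun i _ => hmono ⟨0, hr⟩ i (by simp [Fin.le_def])
      _ = (r : ℝ) * σ1 := by
          simp [Finset.sum_const, Finset.card_univ, nsmul_eq_mul]
  obtain ⟨Zbar, hcl⟩ := exists_closest Zstar Zk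
  have hdk : dSol Zk Zstar = frobNorm (Zk - Zbar) := dSol_eq_of_closest hcl
  set N := frobNorm Zstar ^ 2 with hNdef
  set G := gradf A b Zk with hGdef
  set D := Zk - Zbar with hDdef
  set η := μ / N with hηdef
  have hRC' := hRC Zk Zbar hZk hcl
  rw [← hGdef, ← hDdef, ← hNdef, frobNorm_sq, frobNorm_sq] at hRC'
  have hDk1 : Zk1 - Zbar = D - η • G := by
    rw [hstep, hDdef]; exact sub_right_comm _ _ _
  have hS : sumSq (Zk1 - Zbar) = sumSq D - 2 * η * frobInner G D + η ^ 2 * sumSq G := by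
    rw [hDk1, sumSq_sub_smul]
  have hden : 0 < α * (σ1 / σr) * (r : ℝ) := by positivity
  have hP : 0 ≤ sumSq D := sumSq_nonneg _
  have hQ : 0 ≤ sumSq G := sumSq_nonneg _
  have hη : 0 < η := div_pos hμ0 hN
  have key1 : 2 * μ / (α * (σ1 / σr) * (r : ℝ)) ≤ 2 * η * ((1 / α) * σr) := by
    have heq : 2 * η * ((1 / α) * σr) = 2 * μ * σr / (α * N) := by
      rw [hηdef]; field_simp
    rw [heq, div_le_div_iff₀ hden (by positivity)]
    have hid : 2 * μ * σr * (α * (σ1 / σr) * (r : ℝ)) = 2 * μ * α * ((r : ℝ) * σ1) := by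
      field_simp
    rw [hid]
    have h3 := mul_le_mul_of_nonneg_left hNle (show (0:ℝ) ≤ 2 * μ * α by positivity)
    linarith
  have key0 : 0 ≤ 1 - 2 * μ / (α * (σ1 / σr) * (r : ℝ)) := by
    have h1 : (1:ℝ) ≤ σ1 / σr := (one_le_div hσr).mpr hσ1r
    have h2 : 2 * μ ≤ α * (σ1 / σr) * (r : ℝ) := by
      have ha : α ≤ α * (σ1 / σr) := le_mul_of_one_le_right hα.le h1
      have hb2 : α * (σ1 / σr) ≤ α * (σ1 / σr) * (r : ℝ) :=
        le_mul_of_one_le_right (by positivity) hrR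
      linarith
    have := (div_le_one hden).mpr h2
    linarith
  have hsecond : (η ^ 2 - 2 * η * (1 / (β * N))) * sumSq G ≤ 0 := by
    have hβN : 0 < β * N := by positivity
    have hle : η ≤ 2 / (β * N) := by
      rw [hηdef, ← div_div]
      gcongr
    have : η ^ 2 - 2 * η * (1 / (β * N)) ≤ 0 := by
      have h := mul_le_mul_of_nonneg_left hle hη.le
      have he : η ^ 2 - 2 * η * (1 / (β * N)) = η * η - η * (2 / (β * N)) := by ring
      rw [he]
      linarith [h]
    exact mul_nonpos_of_nonpos_of_nonneg this hQ
  have hIC : 2 * η * ((1 / α) * σr * sumSq D + (1 / (β * N)) * sumSq G)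
      ≤ 2 * η * frobInner G D := mul_le_mul_of_nonneg_left hRC' (by positivity)
  have hmain : sumSq (Zk1 - Zbar)
      ≤ (1 - 2 * μ / (α * (σ1 / σr) * (r : ℝ))) * sumSq D := by
    have step1 : sumSq (Zk1 - Zbar)
        ≤ (1 - 2 * η * ((1 / α) * σr)) * sumSq D
          + (η ^ 2 - 2 * η * (1 / (β * N))) * sumSq G := by
      rw [hS]; linarith [hIC]
    have step3 : (1 - 2 * η * ((1 / α) * σr)) * sumSq D
        ≤ (1 - 2 * μ / (α * (σ1 / σr) * (r : ℝ))) * sumSq D :=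
      mul_le_mul_of_nonneg_right (by linarith [key1]) hP
    linarith
  have hfin : dSol Zk1 Zstar ≤ frobNorm (Zk1 - Zbar) := dSol_le_of_mem _ _ _ hcl.1
  calc dSol Zk1 Zstar ≤ frobNorm (Zk1 - Zbar) := hfin
    _ = Real.sqrt (sumSq (Zk1 - Zbar)) := frobNorm_eq _
    _ ≤ Real.sqrt ((1 - 2 * μ / (α * (σ1 / σr) * (r : ℝ))) * sumSq D) :=
        Real.sqrt_le_sqrt hmain
    _ = Real.sqrt (1 - 2 * μ / (α * (σ1 / σr) * (r : ℝ))) * Real.sqrt (sumSq D) :=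
        Real.sqrt_mul key0 _
    _ = Real.sqrt (1 - 2 * μ / (α * (σ1 / σr) * (r : ℝ))) * dSol Zk Zstar := by
        rw [hdk, frobNorm_eq, hDdef]
end
end

section
/- Suppose Assumption A1 holds with parameter δ satisfying 0 < δ ≤ σ_r/16. Then for any Z ∈ R^{n×r} with d(Z, Z*) ≤ √((3/16) σ_r), setting H = Z − Z̄, we have 2 ‖H H^T‖_F² − δ ‖H‖_F² ≤ (1/m) Σ_{i=1}^m trace(H^T A_i H)² ≤ δ ‖H‖_F² + 2 ‖H H^T‖_F². -/
open Matrix MeasureTheory ProbabilityTheory Real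
open scoped BigOperators ENNReal

noncomputable section

lemma quad_abs_le {n : ℕ} (M : Matrix (Fin n) (Fin n) ℝ) (v : Fin n → ℝ) :
    |v ⬝ᵥ M.mulVec v| ≤ opNorm M * ∑ i, v i ^ 2 := by
  set T := LinearMap.toContinuousLinearMap (Matrix.toEuclideanLin M) with hT
  set w : EuclideanSpace ℝ (Fin n) := (EuclideanSpace.equiv (Fin n) ℝ).symm v with hw
  have h1 : v ⬝ᵥ M.mulVec v = inner ℝ w (T w) := by
    simp only [hT, LinearMap.coe_toContinuousLinearMap', Matrix.toEuclideanLin_apply]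
    simp [PiLp.inner_apply, dotProduct]
    exact Finset.sum_congr rfl fun i _ => mul_comm _ _
  have h2 : ‖w‖ ^ 2 = ∑ i, v i ^ 2 := by
    rw [EuclideanSpace.norm_eq, Real.sq_sqrt (by positivity)]
    simp [Real.norm_eq_abs, sq_abs]; rfl
  rw [h1, ← h2]
  calc |inner ℝ w (T w)| ≤ ‖w‖ * ‖T w‖ := abs_real_inner_le_norm w (T w)
    _ ≤ ‖w‖ * (‖T‖ * ‖w‖) := by
        have h3 : ‖T w‖ ≤ ‖T‖ * ‖w‖ := T.le_opNorm w
        nlinarith [norm_nonneg w]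
    _ = ‖T‖ * ‖w‖ ^ 2 := by ring

lemma dot_sum' {n m : ℕ} (v : Fin n → ℝ) (g : Fin m → Fin n → ℝ) :
    v ⬝ᵥ (∑ i, g i) = ∑ i, v ⬝ᵥ g i := by
  simp only [dotProduct, Finset.sum_apply, Finset.mul_sum]
  exact Finset.sum_comm

lemma sum_mulVec' {n m : ℕ} (M : Fin m → Matrix (Fin n) (Fin n) ℝ) (w : Fin n → ℝ) :
    (∑ i, M i).mulVec w = ∑ i, (M i).mulVec w := by
  ext j
  simp only [Matrix.mulVec, dotProduct, Matrix.sum_apply, Finset.sum_mul, Finset.sum_apply]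
  exact Finset.sum_comm

lemma key_dot {n m : ℕ} (A : Fin m → Matrix (Fin n) (Fin n) ℝ) (c : Fin m → ℝ)
    (u v : Fin n → ℝ) :
    v ⬝ᵥ ((1 / (m : ℝ)) • ∑ i, c i • A i - (2 : ℝ) • vecMulVec u u).mulVec v
      = (1 / (m : ℝ)) * ∑ i, c i * (v ⬝ᵥ (A i).mulVec v) - 2 * (u ⬝ᵥ v) ^ 2 := by
  rw [Matrix.sub_mulVec, dotProduct_sub, Matrix.smul_mulVec, Matrix.smul_mulVec,
    dotProduct_smul, dotProduct_smul, smul_eq_mul, smul_eq_mul]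
  congr 1
  · rw [sum_mulVec', dot_sum']
    congr 1
    exact Finset.sum_congr rfl fun i _ => by
      rw [Matrix.smul_mulVec, dotProduct_smul, smul_eq_mul]
  · have h : (vecMulVec u u).mulVec v = (u ⬝ᵥ v) • u := by
      ext j
      simp only [Matrix.mulVec, vecMulVec_apply, dotProduct, Pi.smul_apply, smul_eq_mul,
        Finset.sum_mul]
      exact Finset.sum_congr rfl fun i _ => by ring
    rw [h, dotProduct_smul, smul_eq_mul, dotProduct_comm v u]
    ring

lemma frob_sq {a b : ℕ} (M : Matrix (Fin a) (Fin b) ℝ) :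
    frobNorm M ^ 2 = ∑ i, ∑ j, (M i j) ^ 2 := by
  rw [frobNorm, Real.sq_sqrt (by positivity)]

lemma frob_sq_trace {a b : ℕ} (M : Matrix (Fin a) (Fin b) ℝ) :
    frobNorm M ^ 2 = Matrix.trace (Mᵀ * M) := by
  rw [frob_sq, Matrix.trace]
  simp only [Matrix.diag, Matrix.mul_apply, Matrix.transpose_apply]
  rw [Finset.sum_comm]
  exact Finset.sum_congr rfl fun j _ => Finset.sum_congr rfl fun i _ => sq (M i j)

lemma trace_col {a b : ℕ} (H : Matrix (Fin a) (Fin b) ℝ) (A : Matrix (Fin a) (Fin a) ℝ) :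
    Matrix.trace (Hᵀ * A * H) = ∑ s, (fun i => H i s) ⬝ᵥ A.mulVec (fun i => H i s) := by
  rw [Matrix.trace]
  simp only [Matrix.diag, Matrix.mul_apply, Matrix.transpose_apply, dotProduct, Matrix.mulVec,
    Finset.sum_mul, Finset.mul_sum]
  refine Finset.sum_congr rfl fun s _ => ?_
  rw [Finset.sum_comm]
  exact Finset.sum_congr rfl fun j _ => Finset.sum_congr rfl fun l _ => by ring

lemma frob_HHt {a b : ℕ} (H : Matrix (Fin a) (Fin b) ℝ) :
    frobNorm (H * Hᵀ) ^ 2 = ∑ s, ∑ k, ((fun i => H i s) ⬝ᵥ (fun i => H i k)) ^ 2 := by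
  have h1 : frobNorm (H * Hᵀ) ^ 2 = frobNorm (Hᵀ * H) ^ 2 := by
    rw [frob_sq_trace, frob_sq_trace, Matrix.transpose_mul, Matrix.transpose_transpose,
      Matrix.transpose_mul, Matrix.transpose_transpose]
    rw [← Matrix.mul_assoc, Matrix.trace_mul_comm]
    simp only [← Matrix.mul_assoc]
  rw [h1, frob_sq]
  refine Finset.sum_congr rfl fun s _ => Finset.sum_congr rfl fun k _ => ?_
  congr 1

set_option maxHeartbeats 2000000 in
theorem lemma_A1_quadratic_bounds {n r m : ℕ} (hr : 0 < r)
    (A : Fin m → Matrix (Fin n) (Fin n) ℝ) (hAsym : ∀ i, (A i).IsSymm)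
(Zstar : Matrix (Fin n) (Fin r) ℝ)
    (sig : Fin r → ℝ) (hpos : ∀ s, 0 < sig s)
    (hmono : ∀ s t : Fin r, s ≤ t → sig t ≤ sig s)
    (hspec : ∃ V, IsOrthoMat V ∧ Zstarᵀ * Zstar = V * Matrix.diagonal sig * Vᵀ)
    (δ : ℝ) (hδ0 : 0 < δ) (hδ : δ ≤ (sig ⟨r - 1, Nat.sub_lt hr Nat.one_pos⟩) / 16)
    (hA1 : AssumpA1 A (sig ⟨0, hr⟩) r δ)
    (Z Zbar : Matrix (Fin n) (Fin r) ℝ)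
    (hZ : dSol Z Zstar ≤ Real.sqrt (3 / 16 * (sig ⟨r - 1, Nat.sub_lt hr Nat.one_pos⟩)))
    (hZbar : IsClosest Zstar Z Zbar) :
    2 * frobNorm ((Z - Zbar) * (Z - Zbar)ᵀ) ^ 2 - δ * frobNorm (Z - Zbar) ^ 2 ≤
      (1 / (m : ℝ)) * ∑ i, (Matrix.trace ((Z - Zbar)ᵀ * A i * (Z - Zbar))) ^ 2 ∧
    (1 / (m : ℝ)) * ∑ i, (Matrix.trace ((Z - Zbar)ᵀ * A i * (Z - Zbar))) ^ 2 ≤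
      δ * frobNorm (Z - Zbar) ^ 2 + 2 * frobNorm ((Z - Zbar) * (Z - Zbar)ᵀ) ^ 2 := by
  set H := Z - Zbar with hHdef
  set h : Fin r → Fin n → ℝ := fun s i => H i s with hhdef
  set q : Fin m → Fin r → ℝ := fun i s => h s ⬝ᵥ (A i).mulVec (h s) with hqdef
  have hrR : (0:ℝ) < r := by exact_mod_cast hr
  haveI hne : Nonempty (solSet Zstar) := ⟨⟨Zbar, hZbar.1⟩⟩
  have hHd : frobNorm H ≤ Real.sqrt (3 / 16 * sig ⟨r - 1, Nat.sub_lt hr Nat.one_pos⟩) := by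
    refine le_trans ?_ hZ
    exact le_ciInf fun Zt => hZbar.2 Zt.1 Zt.2
  have hσ : Real.sqrt (3 / 16 * sig ⟨r - 1, Nat.sub_lt hr Nat.one_pos⟩)
      ≤ Real.sqrt (sig ⟨0, hr⟩) := by
    apply Real.sqrt_le_sqrt
    have h01 : sig ⟨r - 1, Nat.sub_lt hr Nat.one_pos⟩ ≤ sig ⟨0, hr⟩ :=
      hmono ⟨0, hr⟩ _ (by simp [Fin.le_def])
    nlinarith [hpos ⟨r - 1, Nat.sub_lt hr Nat.one_pos⟩]
  have hcol : ∀ s, Real.sqrt (∑ i, h s i ^ 2) ≤ Real.sqrt (sig ⟨0, hr⟩) := by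
    intro s
    refine le_trans ?_ (le_trans hHd hσ)
    rw [frobNorm]
    apply Real.sqrt_le_sqrt
    refine Finset.sum_le_sum fun i _ => ?_
    exact Finset.single_le_sum (f := fun j => H i j ^ 2) (fun j _ => sq_nonneg _)
      (Finset.mem_univ s)
  have hkey : ∀ s k : Fin r,
      |(1 / (m:ℝ)) * (∑ i, q i s * q i k) - 2 * (h s ⬝ᵥ h k) ^ 2|
        ≤ δ / r * ∑ i, h k i ^ 2 := by
    intro s k
    have hb := hA1 (h s) (hcol s)
    have h2 := quad_abs_le
      ((1 / (m:ℝ)) • ∑ i, (h s ⬝ᵥ (A i).mulVec (h s)) • A i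
        - (2:ℝ) • vecMulVec (h s) (h s)) (h k)
    rw [key_dot A (fun i => h s ⬝ᵥ (A i).mulVec (h s)) (h s) (h k)] at h2
    exact le_trans h2 (mul_le_mul_of_nonneg_right hb (by positivity))
  have htr : ∀ i, Matrix.trace (Hᵀ * A i * H) = ∑ s, q i s := fun i => trace_col H (A i)
  have hT : (1 / (m:ℝ)) * ∑ i, (Matrix.trace (Hᵀ * A i * H)) ^ 2
      = ∑ s, ∑ k, (1 / (m:ℝ)) * ∑ i, q i s * q i k := by
    have e1 : ∀ i : Fin m, (Matrix.trace (Hᵀ * A i * H)) ^ 2 = ∑ s, ∑ k, q i s * q i k := by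
      intro i
      rw [htr i, sq, Finset.sum_mul_sum]
    calc (1 / (m:ℝ)) * ∑ i, (Matrix.trace (Hᵀ * A i * H)) ^ 2
        = (1 / (m:ℝ)) * ∑ i, ∑ s, ∑ k, q i s * q i k := by
          rw [Finset.sum_congr rfl fun i _ => e1 i]
      _ = (1 / (m:ℝ)) * ∑ s, ∑ i, ∑ k, q i s * q i k := by
          congr 1; exact Finset.sum_comm
      _ = (1 / (m:ℝ)) * ∑ s, ∑ k, ∑ i, q i s * q i k := by
          congr 1; exact Finset.sum_congr rfl fun s _ => Finset.sum_comm
      _ = ∑ s, ∑ k, (1 / (m:ℝ)) * ∑ i, q i s * q i k := by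
          rw [Finset.mul_sum]
          exact Finset.sum_congr rfl fun s _ => by rw [Finset.mul_sum]
  have hQ : frobNorm (H * Hᵀ) ^ 2 = ∑ s, ∑ k, (h s ⬝ᵥ h k) ^ 2 := frob_HHt H
  have hF : frobNorm H ^ 2 = ∑ k, ∑ i, h k i ^ 2 := by
    rw [frob_sq]; exact Finset.sum_comm
  have main : |(1 / (m:ℝ)) * ∑ i, (Matrix.trace (Hᵀ * A i * H)) ^ 2
      - 2 * frobNorm (H * Hᵀ) ^ 2| ≤ δ * frobNorm H ^ 2 := by
    rw [hT, hQ, hF]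
    have e3 : (∑ s, ∑ k, (1 / (m:ℝ)) * ∑ i, q i s * q i k)
        - 2 * ∑ s, ∑ k, (h s ⬝ᵥ h k) ^ 2
        = ∑ s, ∑ k, ((1 / (m:ℝ)) * (∑ i, q i s * q i k) - 2 * (h s ⬝ᵥ h k) ^ 2) := by
      rw [Finset.mul_sum, ← Finset.sum_sub_distrib]
      refine Finset.sum_congr rfl fun s _ => ?_
      rw [Finset.mul_sum, ← Finset.sum_sub_distrib]
    rw [e3]
    have hr0 : (r:ℝ) ≠ 0 := ne_of_gt hrR
    calc |∑ s, ∑ k, ((1 / (m:ℝ)) * (∑ i, q i s * q i k) - 2 * (h s ⬝ᵥ h k) ^ 2)|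
        ≤ ∑ s, |∑ k, ((1 / (m:ℝ)) * (∑ i, q i s * q i k) - 2 * (h s ⬝ᵥ h k) ^ 2)| :=
          Finset.abs_sum_le_sum_abs _ _
      _ ≤ ∑ s : Fin r, ∑ k, |(1 / (m:ℝ)) * (∑ i, q i s * q i k) - 2 * (h s ⬝ᵥ h k) ^ 2| :=
          Finset.sum_le_sum fun s _ => Finset.abs_sum_le_sum_abs _ _
      _ ≤ ∑ s : Fin r, ∑ k, δ / r * ∑ i, h k i ^ 2 :=
          Finset.sum_le_sum fun s _ => Finset.sum_le_sum fun k _ => hkey s k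
      _ = δ * ∑ k, ∑ i, h k i ^ 2 := by
          rw [Finset.sum_const, Finset.card_univ, Fintype.card_fin, nsmul_eq_mul,
            ← Finset.mul_sum]
          field_simp
  have habs := abs_le.mp main
  constructor
  · linarith [habs.1]
  · linarith [habs.2]
end
end
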